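/- Let $A_T$ be an $n \times k$ real matrix with $\lambda_{\min}(A_T^\top A_T) \ge 1 - \delta$ for some $\delta \in [0,1)$, let $\sigma, \sigma_{sys} > 0$, and set $r = \sigma_{sys}^2 / \sigma^2$. Let $P = (A_T^\top A_T)^{-1} \sigma^2 + \sigma_{sys}^2 I_k$ and $M = A_T^\top A_T + \sigma^2 P^{-1}$. Then $\|M^{-1}\|_2 \le \frac{1}{1 - \delta + \frac{1}{(1-\delta)^{-1} + r}}$. -/

import Mathlib

open Matrix

/-- Spectral norm (induced 2-norm) of a real matrix. -/
noncomputable def matSpectralNorm {m n : ℕ} (A : Matrix (Fin m) (Fin n) ℝ) : ℝ :=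
  ‖LinearMap.toContinuousLinearMap (Matrix.toEuclideanLin A)‖

/-- Minimum eigenvalue of a symmetric (Hermitian) real matrix. -/
noncomputable def lambdaMin {k : ℕ} (M : Matrix (Fin k) (Fin k) ℝ) : ℝ :=
  if h : M.IsHermitian then ⨅ i, h.eigenvalues i else 0

namespace SupportAux

variable {k : ℕ}

/-- conjugation of a diagonal matrix by U -/
noncomputable def conj (U : Matrix (Fin k) (Fin k) ℝ) (v : Fin k → ℝ) :
    Matrix (Fin k) (Fin k) ℝ := U * diagonal v * Uᴴ

lemma conj_mul {U : Matrix (Fin k) (Fin k) ℝ} (hU : Uᴴ * U = 1) (v w : Fin k → ℝ) :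
    conj U v * conj U w = conj U (v * w) := by
  simp only [conj, Matrix.mul_assoc]
  rw [← Matrix.mul_assoc Uᴴ U, hU, Matrix.one_mul,
    ← Matrix.mul_assoc (diagonal v), diagonal_mul_diagonal]
  rfl

lemma conj_add (U : Matrix (Fin k) (Fin k) ℝ) (v w : Fin k → ℝ) :
    conj U v + conj U w = conj U (v + w) := by
  simp only [conj]
  rw [← Matrix.add_mul, ← Matrix.mul_add, diagonal_add]
  rfl

lemma conj_sub (U : Matrix (Fin k) (Fin k) ℝ) (v w : Fin k → ℝ) :
    conj U v - conj U w = conj U (v - w) := by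
  simp only [conj]
  rw [← Matrix.sub_mul, ← Matrix.mul_sub, diagonal_sub]
  rfl

lemma conj_smul (U : Matrix (Fin k) (Fin k) ℝ) (c : ℝ) (v : Fin k → ℝ) :
    c • conj U v = conj U (c • v) := by
  simp [conj, Matrix.smul_mul, Matrix.mul_smul, diagonal_smul]

lemma conj_one {U : Matrix (Fin k) (Fin k) ℝ} (hU : U * Uᴴ = 1) :
    conj U 1 = 1 := by
  rw [conj, show (diagonal (1 : Fin k → ℝ)) = 1 from diagonal_one, Matrix.mul_one, hU]

lemma conj_inv {U : Matrix (Fin k) (Fin k) ℝ} (hU1 : Uᴴ * U = 1) (hU2 : U * Uᴴ = 1)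
    {v : Fin k → ℝ} (hv : ∀ i, v i ≠ 0) : (conj U v)⁻¹ = conj U v⁻¹ := by
  refine Matrix.inv_eq_right_inv ?_
  rw [conj_mul hU1]
  have : v * v⁻¹ = 1 := by
    funext i
    exact mul_inv_cancel₀ (hv i)
  rw [this, conj_one hU2]

lemma conj_posSemidef (U : Matrix (Fin k) (Fin k) ℝ) {v : Fin k → ℝ} (hv : ∀ i, 0 ≤ v i) :
    (conj U v).PosSemidef :=
  (posSemidef_diagonal_iff.mpr hv).mul_mul_conjTranspose_same U

lemma conj_conjTranspose (U : Matrix (Fin k) (Fin k) ℝ) (v : Fin k → ℝ) :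
    (conj U v)ᴴ = conj U v := by
  simp [conj, Matrix.mul_assoc, diagonal_conjTranspose]

end SupportAux

lemma spectralNorm_le_of_posSemidef {k : ℕ} (A : Matrix (Fin k) (Fin k) ℝ) (c : ℝ) (hc : 0 ≤ c)
    (h : (c ^ 2 • (1 : Matrix (Fin k) (Fin k) ℝ) - Aᴴ * A).PosSemidef) :
    matSpectralNorm A ≤ c := by
  rw [matSpectralNorm]
  refine ContinuousLinearMap.opNorm_le_bound _ hc fun x => ?_
  set y : Fin k → ℝ := WithLp.equiv 2 (Fin k → ℝ) x with hy
  have key : (A *ᵥ y) ⬝ᵥ (A *ᵥ y) ≤ c ^ 2 * (y ⬝ᵥ y) := by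
    have h2 := h.dotProduct_mulVec_nonneg y
    have hexp : star y ⬝ᵥ ((c ^ 2 • (1 : Matrix (Fin k) (Fin k) ℝ) - Aᴴ * A) *ᵥ y)
        = c ^ 2 * (y ⬝ᵥ y) - (A *ᵥ y) ⬝ᵥ (A *ᵥ y) := by
      rw [sub_mulVec, dotProduct_sub, smul_mulVec, one_mulVec]
      congr 1
      · simp [dotProduct_smul, star_trivial]
      · rw [star_trivial, ← Matrix.mulVec_mulVec, dotProduct_mulVec,
          conjTranspose_eq_transpose_of_trivial, vecMul_transpose]
    linarith [hexp ▸ h2]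
  have hnx : ‖x‖ = Real.sqrt (y ⬝ᵥ y) := by
    rw [EuclideanSpace.norm_eq]
    congr 1
    simp [dotProduct, hy, Real.norm_eq_abs, sq_abs, pow_two]
  have hnAx : ‖(LinearMap.toContinuousLinearMap (toEuclideanLin A)) x‖
      = Real.sqrt ((A *ᵥ y) ⬝ᵥ (A *ᵥ y)) := by
    rw [EuclideanSpace.norm_eq]
    congr 1
    simp [toEuclideanLin_apply, dotProduct, Real.norm_eq_abs, sq_abs, pow_two, hy]
  rw [hnAx, hnx]
  calc Real.sqrt ((A *ᵥ y) ⬝ᵥ (A *ᵥ y)) ≤ Real.sqrt (c ^ 2 * (y ⬝ᵥ y)) := Real.sqrt_le_sqrt key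
    _ = c * Real.sqrt (y ⬝ᵥ y) := by
        rw [Real.sqrt_mul (sq_nonneg c), Real.sqrt_sq hc]

/-- bound on `‖M⁻¹‖₂` after a support change, i.e. when
`P = (A_Tᵀ A_T)⁻¹ σ² + σ_sys² I` and `M = A_Tᵀ A_T + σ² P⁻¹`:
`‖M⁻¹‖₂ ≤ 1 / (1 - δ + 1/((1-δ)⁻¹ + r))` with `r = σ_sys²/σ²`. -/
theorem Minv_bound_after_support_change {n k : ℕ}
    (A_T : Matrix (Fin n) (Fin k) ℝ) (δ : ℝ) (hδ0 : 0 ≤ δ) (hδ1 : δ < 1)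
    (hmin : 1 - δ ≤ lambdaMin (A_Tᵀ * A_T))
    (σ σsys : ℝ) (hσ : 0 < σ) (hσsys : 0 < σsys)
    (r : ℝ) (hr : r = σsys ^ 2 / σ ^ 2)
    (P : Matrix (Fin k) (Fin k) ℝ)
    (hP : P = σ ^ 2 • (A_Tᵀ * A_T)⁻¹ + σsys ^ 2 • (1 : Matrix (Fin k) (Fin k) ℝ))
    (M : Matrix (Fin k) (Fin k) ℝ) (hM : M = A_Tᵀ * A_T + σ ^ 2 • P⁻¹) :
    matSpectralNorm M⁻¹ ≤ 1 / (1 - δ + 1 / ((1 - δ)⁻¹ + r)) := by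
  have hδ : 0 < 1 - δ := by linarith
  have hr0 : 0 ≤ r := by rw [hr]; positivity
  have hB : (A_Tᵀ * A_T).IsHermitian := by
    rw [← conjTranspose_eq_transpose_of_trivial]
    exact isHermitian_conjTranspose_mul_self A_T
  set U : Matrix (Fin k) (Fin k) ℝ := (hB.eigenvectorUnitary : Matrix (Fin k) (Fin k) ℝ) with hUdef
  have hU1 : Uᴴ * U = 1 := by
    simpa [star_eq_conjTranspose] using (mem_unitaryGroup_iff'.mp hB.eigenvectorUnitary.2)
  have hU2 : U * Uᴴ = 1 := by
    simpa [star_eq_conjTranspose] using (mem_unitaryGroup_iff.mp hB.eigenvectorUnitary.2)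
  set d := hB.eigenvalues with hddef
  have hBspec : A_Tᵀ * A_T = SupportAux.conj U d := by
    have := hB.spectral_theorem
    simpa [SupportAux.conj, RCLike.ofReal_real_eq_id, star_eq_conjTranspose] using this
  have hd : ∀ i, 1 - δ ≤ d i := by
    intro i
    refine le_trans ?_ (ciInf_le (Finite.bddBelow_range _) i)
    rwa [lambdaMin, dif_pos hB] at hmin
  have hd0 : ∀ i, 0 < d i := fun i => lt_of_lt_of_le hδ (hd i)
  set p : Fin k → ℝ := fun i => σ ^ 2 * (d i)⁻¹ + σsys ^ 2 with hpdef
  have hp0 : ∀ i, 0 < p i := by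
    intro i
    have := hd0 i
    have : 0 < (d i)⁻¹ := inv_pos.mpr this
    positivity
  set m : Fin k → ℝ := fun i => d i + σ ^ 2 * (p i)⁻¹ with hmdef
  have hm0 : ∀ i, 0 < m i := by
    intro i
    have h1 := hd0 i
    have h2 : 0 < (p i)⁻¹ := inv_pos.mpr (hp0 i)
    positivity
  have hBinv : (A_Tᵀ * A_T)⁻¹ = SupportAux.conj U d⁻¹ := by
    rw [hBspec, SupportAux.conj_inv hU1 hU2 (fun i => (hd0 i).ne')]
  have hPc : P = SupportAux.conj U p := by
    have h1 : (σsys ^ 2 • (1 : Matrix (Fin k) (Fin k) ℝ))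
        = SupportAux.conj U (fun _ => σsys ^ 2) := by
      rw [← SupportAux.conj_one hU2, SupportAux.conj_smul]
      exact congrArg _ (funext fun i => by simp)
    rw [hP, hBinv, SupportAux.conj_smul, h1, SupportAux.conj_add]
    exact congrArg _ (funext fun i => by simp [hpdef])
  have hPinv : P⁻¹ = SupportAux.conj U p⁻¹ := by
    rw [hPc, SupportAux.conj_inv hU1 hU2 (fun i => (hp0 i).ne')]
  have hMc : M = SupportAux.conj U m := by
    rw [hM, hBspec, hPinv, SupportAux.conj_smul, SupportAux.conj_add]
    exact congrArg _ (funext fun i => by simp [hmdef])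
  have hMinv : M⁻¹ = SupportAux.conj U m⁻¹ := by
    rw [hMc, SupportAux.conj_inv hU1 hU2 (fun i => (hm0 i).ne')]
  set μ : ℝ := 1 - δ + 1 / ((1 - δ)⁻¹ + r) with hμdef
  have hden : 0 < (1 - δ)⁻¹ + r := by
    have : 0 < (1 - δ)⁻¹ := inv_pos.mpr hδ
    linarith
  have hμ : 0 < μ := by
    have : 0 < 1 / ((1 - δ)⁻¹ + r) := by positivity
    rw [hμdef]; linarith
  have hmμ : ∀ i, μ ≤ m i := by
    intro i
    have hdi := hd0 i
    have hσ2 : (0:ℝ) < σ ^ 2 := by positivity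
    have hpr : p i = σ ^ 2 * ((d i)⁻¹ + r) := by
      rw [hpdef, hr]
      field_simp
    have hterm : σ ^ 2 * (p i)⁻¹ = ((d i)⁻¹ + r)⁻¹ := by
      rw [hpr, mul_inv, ← mul_assoc, mul_inv_cancel₀ hσ2.ne', one_mul]
    have hdeni : 0 < (d i)⁻¹ + r := by
      have : 0 < (d i)⁻¹ := inv_pos.mpr hdi
      linarith
    have hmono : ((1 - δ)⁻¹ + r)⁻¹ ≤ ((d i)⁻¹ + r)⁻¹ := by
      apply inv_anti₀ hdeni
      have : (d i)⁻¹ ≤ (1 - δ)⁻¹ := one_div (d i) ▸ inv_anti₀ hδ (hd i)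
      linarith
    have : μ = (1 - δ) + ((1 - δ)⁻¹ + r)⁻¹ := by rw [hμdef, one_div]
    rw [this, hmdef]
    simp only
    rw [hterm]
    exact add_le_add (hd i) hmono
  refine spectralNorm_le_of_posSemidef _ _ (by positivity) ?_
  have hone : ((1 / μ) ^ 2 • (1 : Matrix (Fin k) (Fin k) ℝ))
      = SupportAux.conj U (fun _ => (1 / μ) ^ 2) := by
    rw [← SupportAux.conj_one hU2, SupportAux.conj_smul]
    exact congrArg _ (funext fun i => by simp)
  rw [hMinv, SupportAux.conj_conjTranspose, SupportAux.conj_mul hU1, hone,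
    SupportAux.conj_sub]
  refine SupportAux.conj_posSemidef U ?_
  intro i
  have h1 : (m i)⁻¹ ≤ 1 / μ := by
    rw [one_div]
    exact inv_anti₀ hμ (hmμ i)
  have h2 : (0:ℝ) ≤ (m i)⁻¹ := inv_nonneg.mpr (hm0 i).le
  have : (m i)⁻¹ * (m i)⁻¹ ≤ (1 / μ) ^ 2 := by
    rw [pow_two]
    exact mul_le_mul h1 h1 h2 (by positivity)
  simpa [Pi.sub_apply, Pi.mul_apply, sub_nonneg] using this
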